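/- Let 𝒜 be a semi-abelian category, P a regular projective object, A a simplicial object in 𝒜, and n ≥ 1. Then there is a bijection, natural in A, between the n-th homotopy group πₙ(hom(P,A), 0) of the Kan simplicial set hom(P,A) at the zero vertex and the set hom(P, HₙA), given by sending the homotopy class of f : P → ZₙA to qₙ ∘ f. -/

import Mathlib

universe w v u
noncomputable section
open CategoryTheory CategoryTheory.Limits CategoryTheory.Subobject Opposite Simplicial

namespace SemiAbPaper
section Base


variable {C : Type u} [Category.{v} C]

/-- A regular epimorphism (propositional form). -/
def IsRegEpi {X Y : C} (f : X ⟶ Y) : Prop := Nonempty (RegularEpi f)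

/-- A regular projective object. -/
def RegularProjective (P : C) : Prop :=
  ∀ {X Y : C} (e : X ⟶ Y), IsRegEpi e → ∀ g : P ⟶ Y, ∃ h : P ⟶ X, h ≫ e = g

/-- `C` has enough regular projectives. -/
def EnoughRegularProjectives (C : Type u) [Category.{v} C] : Prop :=
  ∀ X : C, ∃ (P : C) (p : P ⟶ X), RegularProjective P ∧ IsRegEpi p

/-- A regular category: finitely complete, coequalizers of kernel pairs,
regular epimorphisms stable under pullback. -/
class IsRegularCategory (C : Type u) [Category.{v} C] [HasFiniteLimits C] : Prop where
  hasCoequalizersOfKernelPairs :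
    ∀ {X Y : C} (f : X ⟶ Y), HasColimit (parallelPair (pullback.fst f f) (pullback.snd f f))
  regularEpiPullbackStable :
    ∀ {X Y Z : C} (f : X ⟶ Y) (g : Z ⟶ Y), IsRegEpi f → IsRegEpi (pullback.snd f g)

/-- A semi-abelian category (relative to ambient pointedness and finite completeness):
Barr-exact, Bourn-protomodular, with binary coproducts and a zero object. -/
class IsSemiAbelian (C : Type u) [Category.{v} C] [HasZeroMorphisms C] [HasFiniteLimits C] :
    Prop where
  hasZeroObject : HasZeroObject C
  hasBinaryCoproducts : HasBinaryCoproducts C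
  hasCoequalizersOfKernelPairs :
    ∀ {X Y : C} (f : X ⟶ Y), HasColimit (parallelPair (pullback.fst f f) (pullback.snd f f))
  regularEpiPullbackStable :
    ∀ {X Y Z : C} (f : X ⟶ Y) (g : Z ⟶ Y), IsRegEpi f → IsRegEpi (pullback.snd f g)
  /-- Barr-exactness: every internal equivalence relation is a kernel pair. -/
  exactEquivalenceRelations :
    ∀ {R X : C} (r₀ r₁ : R ⟶ X),
      (∀ {T : C} (a b : T ⟶ R), a ≫ r₀ = b ≫ r₀ → a ≫ r₁ = b ≫ r₁ → a = b) →
      (∀ T : C, _root_.Equivalence fun x y : T ⟶ X => ∃ t : T ⟶ R, t ≫ r₀ = x ∧ t ≫ r₁ = y) →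
      ∃ (Y : C) (f : X ⟶ Y), IsKernelPair f r₀ r₁
  /-- Bourn-protomodularity: the Short Five Lemma. -/
  protomodular :
    ∀ {E' B' E B : C} (p' : E' ⟶ B') (p : E ⟶ B), IsRegEpi p' → IsRegEpi p →
      ∀ (v : E' ⟶ E) (w : B' ⟶ B), p' ≫ w = v ≫ p →
      ∀ u : kernel p' ⟶ kernel p, u ≫ kernel.ι p = kernel.ι p' ≫ v →
      IsIso u → IsIso w → IsIso v


end Base

section MoorePart

variable {C : Type u} [Category.{v} C] [HasZeroMorphisms C] [HasFiniteLimits C]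

namespace Moore

variable (X : SimplicialObject C)

/-- The `n`-th object of the Moore complex of `X`:
the intersection of the kernels of `∂ᵢ : Xₙ ⟶ X_{n-1}` for `0 ≤ i ≤ n-1`. -/
def NSub : ∀ n : ℕ, Subobject (X _⦋n⦌) := fun n => match n with
  | 0 => ⊤
  | n + 1 => Finset.univ.inf fun k : Fin (n + 1) => kernelSubobject (X.δ k.castSucc)

/-- The `n`-th object of the Moore complex, as an object of `C`. -/
def NObj (n : ℕ) : C := (NSub X n : C)

theorem arrow_comp_δ_castSucc (n : ℕ) (i : Fin (n + 1)) :
    (NSub X (n + 1)).arrow ≫ X.δ i.castSucc = 0 := by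
  show (Finset.univ.inf fun k : Fin (n + 1) =>
      kernelSubobject (X.δ k.castSucc)).arrow ≫ X.δ i.castSucc = 0
  rw [← factorThru_arrow _ _ (finset_inf_arrow_factors Finset.univ
      (fun k : Fin (n + 1) => kernelSubobject (X.δ k.castSucc)) i (Finset.mem_univ _)),
    Category.assoc, kernelSubobject_arrow_comp, comp_zero]

/-- The differential `dₙ₊₁ : Nₙ₊₁X ⟶ NₙX` of the Moore complex, induced by the
last face `∂ₙ₊₁`. -/
def MooreD : ∀ n : ℕ, NObj X (n + 1) ⟶ NObj X n := fun n => match n with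
  | 0 => (NSub X 1).arrow ≫ X.δ (Fin.last 1) ≫ inv (I := isIso_top_arrow) (⊤ : Subobject (X _⦋0⦌)).arrow
  | n + 1 =>
    factorThru _ ((NSub X (n + 2)).arrow ≫ X.δ (Fin.last (n + 2))) (by
      refine (finset_inf_factors _).mpr fun i _ => ?_
      apply kernelSubobject_factors
      change ((NSub X (n + 2)).arrow ≫ X.δ (Fin.last (n + 2))) ≫ X.δ i.castSucc = 0
      rw [Category.assoc,
        show X.δ (Fin.last (n + 2)) = X.δ ((Fin.last (n + 1)).succ) from by rw [Fin.succ_last],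
        X.δ_comp_δ (Fin.le_last i.castSucc), ← Category.assoc,
        arrow_comp_δ_castSucc, zero_comp])

theorem d_squared (n : ℕ) : MooreD X (n + 1) ≫ MooreD X n = 0 := by
  rcases n with _ | n <;> dsimp [MooreD, NObj]
  · erw [factorThru_arrow_assoc,
      show X.δ (Fin.last 2) = X.δ ((Fin.last 1).succ) from by rw [Fin.succ_last],
      Category.assoc, X.δ_comp_δ_assoc (le_refl (Fin.last 1)), ← Category.assoc,
      arrow_comp_δ_castSucc, zero_comp]
    rfl
  · apply (cancel_mono (NSub X (n + 1)).arrow).1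
    erw [Category.assoc, factorThru_arrow, factorThru_arrow_assoc,
      show X.δ (Fin.last (n + 3)) = X.δ ((Fin.last (n + 2)).succ) from by rw [Fin.succ_last],
      Category.assoc, X.δ_comp_δ (le_refl (Fin.last (n + 2))), ← Category.assoc,
      arrow_comp_δ_castSucc, zero_comp, zero_comp]

variable [HasCokernels C]

/-- The homology `HₙX` of the Moore complex of `X`:
the cokernel of the factorization of `dₙ₊₁` through the kernel of `dₙ`. -/
def H : ℕ → C := fun n => match n with
  | 0 => cokernel (MooreD X 0)
  | n + 1 => cokernel (kernel.lift (MooreD X n) (MooreD X (n + 1)) (d_squared X n))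

/-- The object of `n`-cycles `ZₙX = ⋂_{i ∈ [n]} K[∂ᵢ]`
(realized as `X₀` for `n = 0` and as the kernel of `dₙ` for `n ≥ 1`). -/
def Z : ℕ → C := fun n => match n with
  | 0 => X _⦋0⦌
  | n + 1 => kernel (MooreD X n)

/-- The monomorphism `ZₙX ⟶ Xₙ`. -/
def zArrow : ∀ n : ℕ, Z X n ⟶ X _⦋n⦌
  | 0 => 𝟙 _
  | n + 1 => kernel.ι (MooreD X n) ≫ (NSub X (n + 1)).arrow

/-- The canonical quotient map `qₙ : ZₙX ⟶ HₙX`. -/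
def q : ∀ n : ℕ, Z X n ⟶ H X n := fun n => match n with
  | 0 => inv (I := isIso_top_arrow) (⊤ : Subobject (X _⦋0⦌)).arrow ≫ cokernel.π (MooreD X 0)
  | n + 1 => cokernel.π (kernel.lift (MooreD X n) (MooreD X (n + 1)) (d_squared X n))

end Moore

end MoorePart

section NablaPart

variable {C : Type u} [Category.{v} C] [HasFiniteLimits C]

namespace Nabla

/-- Pairs `i < j` in `[n+2]`. -/
def PairIdx (n : ℕ) : Type := {p : Fin (n + 3) × Fin (n + 3) // p.1 < p.2}

instance (n : ℕ) : Fintype (PairIdx n) := by unfold PairIdx; infer_instance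

variable (X : SimplicialObject C)

/-- The object `∇ₙX` of `n`-cycles: `∇₀X = X₀ × X₀`, and for `n ≥ 1`, the subobject of
`Xₙ^{n+2}` of tuples `(x₀, …, x_{n+1})` with `∂ᵢ ∘ xⱼ = ∂_{j-1} ∘ xᵢ` for `i < j` in `[n+1]`. -/
def obj : ℕ → C := fun n => match n with
  | 0 => Limits.prod (X _⦋0⦌) (X _⦋0⦌)
  | n + 1 =>
    equalizer
      (Pi.lift fun p : PairIdx n =>
        Pi.π (fun _ : Fin (n + 3) => X _⦋n + 1⦌) p.1.2 ≫
          X.δ (⟨p.1.1, by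
            have h1 : (p.1.1 : ℕ) < (p.1.2 : ℕ) := p.2
            have h2 : (p.1.2 : ℕ) < n + 3 := p.1.2.isLt
            omega⟩ : Fin (n + 2)))
      (Pi.lift fun p : PairIdx n =>
        Pi.π (fun _ : Fin (n + 3) => X _⦋n + 1⦌) p.1.1 ≫
          X.δ (⟨(p.1.2 : ℕ) - 1, by
            have h2 : (p.1.2 : ℕ) < n + 3 := p.1.2.isLt
            omega⟩ : Fin (n + 2)))

/-- The projection `prᵢ : ∇ₙX ⟶ Xₙ`. -/
def pr : ∀ (n : ℕ) (_ : Fin (n + 2)), obj X n ⟶ X _⦋n⦌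
  | 0, i => if i = 0 then Limits.prod.fst else Limits.prod.snd
  | n + 1, i => equalizer.ι _ _ ≫ Pi.π (fun _ : Fin (n + 3) => X _⦋n + 1⦌) i

/-- The object `∇ₙ(X⁻)`, where `X⁻` is the shifted simplicial object with
`(X⁻)ₙ = X_{n+1}` and `∂ᵢ⁻ = ∂_{i+1}`. -/
def shiftObj : ℕ → C := fun n => match n with
  | 0 => Limits.prod (X _⦋1⦌) (X _⦋1⦌)
  | n + 1 =>
    equalizer
      (Pi.lift fun p : PairIdx n =>
        Pi.π (fun _ : Fin (n + 3) => X _⦋n + 2⦌) p.1.2 ≫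
          X.δ (⟨(p.1.1 : ℕ) + 1, by
            have h1 : (p.1.1 : ℕ) < (p.1.2 : ℕ) := p.2
            have h2 : (p.1.2 : ℕ) < n + 3 := p.1.2.isLt
            omega⟩ : Fin (n + 3)))
      (Pi.lift fun p : PairIdx n =>
        Pi.π (fun _ : Fin (n + 3) => X _⦋n + 2⦌) p.1.1 ≫
          X.δ (⟨(p.1.2 : ℕ), by
            have h2 : (p.1.2 : ℕ) < n + 3 := p.1.2.isLt
            omega⟩ : Fin (n + 3)))

/-- The projection `prᵢ : ∇ₙ(X⁻) ⟶ X_{n+1}`. -/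
def shiftPr : ∀ (n : ℕ) (_ : Fin (n + 2)), shiftObj X n ⟶ X _⦋n + 1⦌
  | 0, i => if i = 0 then Limits.prod.fst else Limits.prod.snd
  | n + 1, i => equalizer.ι _ _ ≫ Pi.π (fun _ : Fin (n + 3) => X _⦋n + 2⦌) i

end Nabla

end NablaPart

section HornPart

variable {C : Type u} [Category.{v} C]


/-- An `(n+1, k)`-horn of a simplicial object `A` with vertex of definition `X`:
a family `xᵢ : X ⟶ Aₙ` (`i ≠ k`) with `∂ᵢ ∘ xⱼ = ∂_{j-1} ∘ xᵢ` for `i < j`, `i, j ≠ k`. -/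
structure HornData (A : SimplicialObject C) (n : ℕ) (k : Fin (n + 2)) (X : C) where
  x : ∀ i : Fin (n + 2), i ≠ k → (X ⟶ A _⦋n⦌)
  compat : ∀ (m : ℕ) (hm : n = m + 1) (i j : Fin (n + 2)) (hi : i ≠ k) (hj : j ≠ k)
      (hij : (i : ℕ) < (j : ℕ)),
      x j hj ≫ eqToHom (by rw [hm]) ≫ A.δ (⟨(i : ℕ), by
          have := j.isLt; omega⟩ : Fin (m + 2)) =
      x i hi ≫ eqToHom (by rw [hm]) ≫ A.δ (⟨(j : ℕ) - 1, by
          have := j.isLt; omega⟩ : Fin (m + 2))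

/-- `A` is Kan (internally, up to regular epimorphism). -/
def IsKanObject (A : SimplicialObject C) : Prop :=
  ∀ (n : ℕ) (k : Fin (n + 2)) (X : C) (h : HornData A n k X),
    ∃ (Y : C) (p : Y ⟶ X), IsRegEpi p ∧
      ∃ a : Y ⟶ A _⦋n + 1⦌, ∀ (i : Fin (n + 2)) (hi : i ≠ k), a ≫ A.δ i = p ≫ h.x i hi

/-- `f : A ⟶ B` is a Kan fibration (internally, up to regular epimorphism). -/
def IsKanFibration {A B : SimplicialObject C} (f : A ⟶ B) : Prop :=
  ∀ (n : ℕ) (k : Fin (n + 2)) (X : C) (h : HornData A n k X) (b : X ⟶ B _⦋n + 1⦌),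
    (∀ (i : Fin (n + 2)) (hi : i ≠ k), b ≫ B.δ i = h.x i hi ≫ f.app (op ⦋n⦌)) →
    ∃ (Y : C) (p : Y ⟶ X), IsRegEpi p ∧
      ∃ a : Y ⟶ A _⦋n + 1⦌, a ≫ f.app (op ⦋n + 1⦌) = p ≫ b ∧
        ∀ (i : Fin (n + 2)) (hi : i ≠ k), a ≫ A.δ i = p ≫ h.x i hi

/-- A simplicial set (simplicial object of `Type`) is a Kan complex. -/
def IsKanSSet (K : SimplicialObject (Type w)) : Prop :=
  ∀ (n : ℕ) (k : Fin (n + 2)) (x : ∀ i : Fin (n + 2), i ≠ k → K _⦋n⦌),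
    (∀ (m : ℕ) (hm : n = m + 1) (i j : Fin (n + 2)) (hi : i ≠ k) (hj : j ≠ k)
      (hij : (i : ℕ) < (j : ℕ)),
      K.δ (⟨(i : ℕ), by have := j.isLt; omega⟩ : Fin (m + 2)) (_root_.cast (show K _⦋n⦌ = K _⦋m+1⦌ by rw [hm]) (x j hj)) =
      K.δ (⟨(j : ℕ) - 1, by have := j.isLt; omega⟩ : Fin (m + 2))
        (_root_.cast (show K _⦋n⦌ = K _⦋m+1⦌ by rw [hm]) (x i hi))) →
    ∃ y : K _⦋n + 1⦌, ∀ (i : Fin (n + 2)) (hi : i ≠ k), K.δ i y = x i hi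

/-- A map of simplicial sets is a Kan fibration. -/
def IsKanFibrationSSet {K L : SimplicialObject (Type w)} (g : K ⟶ L) : Prop :=
  ∀ (n : ℕ) (k : Fin (n + 2)) (x : ∀ i : Fin (n + 2), i ≠ k → K _⦋n⦌),
    (∀ (m : ℕ) (hm : n = m + 1) (i j : Fin (n + 2)) (hi : i ≠ k) (hj : j ≠ k)
      (hij : (i : ℕ) < (j : ℕ)),
      K.δ (⟨(i : ℕ), by have := j.isLt; omega⟩ : Fin (m + 2)) (_root_.cast (show K _⦋n⦌ = K _⦋m+1⦌ by rw [hm]) (x j hj)) =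
      K.δ (⟨(j : ℕ) - 1, by have := j.isLt; omega⟩ : Fin (m + 2))
        (_root_.cast (show K _⦋n⦌ = K _⦋m+1⦌ by rw [hm]) (x i hi))) →
    ∀ b : L _⦋n + 1⦌,
      (∀ (i : Fin (n + 2)) (hi : i ≠ k), L.δ i b = g.app (op ⦋n⦌) (x i hi)) →
      ∃ a : K _⦋n + 1⦌, g.app (op ⦋n + 1⦌) a = b ∧
        ∀ (i : Fin (n + 2)) (hi : i ≠ k), K.δ i a = x i hi

/-- The simplicial set `hom(P, A)`. -/
def homSimplicial (P : C) (A : SimplicialObject C) : SimplicialObject (Type v) :=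
  A ⋙ coyoneda.obj (op P)

/-- The map of simplicial sets `hom(P, f)`. -/
def homSimplicialMap (P : C) {A B : SimplicialObject C} (f : A ⟶ B) :
    homSimplicial P A ⟶ homSimplicial P B :=
  Functor.whiskerRight f (coyoneda.obj (op P))


end HornPart

section SSetPart


variable {K L : SimplicialObject (Type w)}

/-- The iterated degeneracy `σ₀ⁿ(x)` of a vertex `x`. -/
def bpt (K : SimplicialObject (Type w)) (x : K _⦋0⦌) : ∀ n : ℕ, K _⦋n⦌
  | 0 => x
  | n + 1 => K.σ (0 : Fin (n + 1)) (bpt K x n)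

/-- `Zₙ(K, x)`: the `n`-simplices all of whose faces are the basepoint. -/
def SZ (K : SimplicialObject (Type w)) (x : K _⦋0⦌) : ℕ → Type w := fun n => match n with
  | 0 => K _⦋0⦌
  | n + 1 => { z : K.obj (op (SimplexCategory.mk (n + 1))) // ∀ i : Fin (n + 2), K.δ i z = bpt K x n }

/-- The underlying `n`-simplex of an element of `Zₙ(K, x)`. -/
def szVal {K : SimplicialObject (Type w)} {x : K _⦋0⦌} : ∀ {n : ℕ}, SZ K x n → K _⦋n⦌ := fun {n} z => match n, z with
  | 0, z => z
  | _ + 1, z => z.1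

/-- The homotopy relation on `Zₙ(K, x)`: `z ∼ z'` iff there is `y ∈ K_{n+1}` with
`∂ᵢ(y) = x` for `i < n`, `∂ₙ(y) = z` and `∂_{n+1}(y) = z'`. -/
def hRel (K : SimplicialObject (Type w)) (x : K _⦋0⦌) (n : ℕ) (z z' : SZ K x n) : Prop :=
  ∃ y : K _⦋n + 1⦌,
    (∀ i : Fin (n + 2), (i : ℕ) < n → K.δ i y = bpt K x n) ∧
    K.δ (⟨n, by omega⟩ : Fin (n + 2)) y = szVal z ∧
    K.δ (Fin.last (n + 1)) y = szVal z'

/-- The homotopy "group" `πₙ(K, x)` as a quotient set. -/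
def piSet (K : SimplicialObject (Type w)) (x : K _⦋0⦌) (n : ℕ) : Type w :=
  Quot (hRel K x n)

theorem δ_app (g : K ⟶ L) {n : ℕ} (i : Fin (n + 2)) (z : K _⦋n + 1⦌) :
    L.δ i (g.app (op ⦋n + 1⦌) z) = g.app (op ⦋n⦌) (K.δ i z) := by
  have := FunctorToTypes.naturality g (SimplexCategory.δ i).op z
  simpa [SimplicialObject.δ] using this.symm

theorem σ_app (g : K ⟶ L) {n : ℕ} (i : Fin (n + 1)) (z : K _⦋n⦌) :
    L.σ i (g.app (op ⦋n⦌) z) = g.app (op ⦋n + 1⦌) (K.σ i z) := by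
  have := FunctorToTypes.naturality g (SimplexCategory.σ i).op z
  simpa [SimplicialObject.σ] using this.symm

theorem bpt_app (g : K ⟶ L) (x : K _⦋0⦌) :
    ∀ n : ℕ, g.app (op ⦋n⦌) (bpt K x n) = bpt L (g.app (op ⦋0⦌) x) n := fun n => match n with
  | 0 => rfl
  | n + 1 => by rw [bpt, bpt, ← bpt_app g x n, σ_app]

/-- The map `Zₙ(K, x) → Zₙ(L, g(x))` induced by `g : K ⟶ L`. -/
def szMap (g : K ⟶ L) (x : K _⦋0⦌) : ∀ n : ℕ, SZ K x n → SZ L (g.app (op ⦋0⦌) x) n := fun n z => match n, z with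
  | 0, z => g.app (op ⦋0⦌) z
  | n + 1, z => ⟨g.app (op ⦋n + 1⦌) z.1, fun i => by
      rw [δ_app, z.2 i, bpt_app]⟩

theorem szVal_szMap (g : K ⟶ L) (x : K _⦋0⦌) :
    ∀ (n : ℕ) (z : SZ K x n), szVal (szMap g x n z) = g.app (op ⦋n⦌) (szVal z) := fun n z => match n, z with
  | 0, _ => rfl
  | _ + 1, _ => rfl

/-- The map `πₙ(K, x) → πₙ(L, g(x))` induced by `g : K ⟶ L`. -/
def piMap (g : K ⟶ L) (x : K _⦋0⦌) (n : ℕ) :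
    piSet K x n → piSet L (g.app (op ⦋0⦌) x) n :=
  Quot.map (szMap g x n) (by
    rintro z z' ⟨y, h1, h2, h3⟩
    refine ⟨g.app (op ⦋n + 1⦌) y, fun i hi => by rw [δ_app, h1 i hi, bpt_app], ?_, ?_⟩
    · rw [δ_app, h2, szVal_szMap]
    · rw [δ_app, h3, szVal_szMap])

/-- `g : K ⟶ L` is a weak equivalence of simplicial sets: it induces bijections on
all homotopy groups at all basepoints. -/
def IsWeakEquivalenceSSet (g : K ⟶ L) : Prop :=
  ∀ (n : ℕ) (x : K _⦋0⦌), Function.Bijective (piMap g x n)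


end SSetPart


section HMapPart
variable {C : Type u} [Category.{v} C] [HasZeroMorphisms C] [HasFiniteLimits C] [HasCokernels C]

/-- The data of the morphisms induced by a simplicial morphism `f : A ⟶ B` on Moore
complexes, on cycles, and on homology; each component is uniquely determined by the
stated compatibility. -/
structure HMapData {A B : SimplicialObject C} (f : A ⟶ B) where
  ν : ∀ n : ℕ, Moore.NObj A n ⟶ Moore.NObj B n
  hν : ∀ n : ℕ, ν n ≫ (Moore.NSub B n).arrow = (Moore.NSub A n).arrow ≫ f.app (op ⦋n⦌)
  κ : ∀ n : ℕ, kernel (Moore.MooreD A n) ⟶ kernel (Moore.MooreD B n)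
  hκ : ∀ n : ℕ, κ n ≫ kernel.ι (Moore.MooreD B n) = kernel.ι (Moore.MooreD A n) ≫ ν (n + 1)
  η : ∀ n : ℕ, Moore.H A n ⟶ Moore.H B n
  hη₀ : cokernel.π (Moore.MooreD A 0) ≫ η 0 = ν 0 ≫ cokernel.π (Moore.MooreD B 0)
  hη : ∀ n : ℕ,
    cokernel.π (kernel.lift (Moore.MooreD A n) (Moore.MooreD A (n + 1)) (Moore.d_squared A n)) ≫
        η (n + 1) =
      κ n ≫
        cokernel.π (kernel.lift (Moore.MooreD B n) (Moore.MooreD B (n + 1)) (Moore.d_squared B n))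

/-- `f` is a homology isomorphism. -/
def IsHomologyIso {A B : SimplicialObject C} (f : A ⟶ B) : Prop :=
  ∀ d : HMapData f, ∀ n : ℕ, IsIso (d.η n)

end HMapPart


section Proof16
namespace P16

variable {C : Type u} [Category.{v} C]

theorem isRegEpi_of_section {X Y : C} (f : X ⟶ Y) (s : Y ⟶ X) (hs : s ≫ f = 𝟙 Y) :
    IsRegEpi f :=
  haveI : IsSplitEpi f := IsSplitEpi.mk' ⟨s, hs⟩
  ⟨RegularEpi.ofSplitEpi f⟩

theorem epi_of_isRegEpi {X Y : C} {f : X ⟶ Y} (h : IsRegEpi f) : Epi f := by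
  obtain ⟨h⟩ := h
  haveI := isRegularEpi_of_regularEpi h
  infer_instance

theorem regEpi_mono_lift {X Y Z W : C} (f : X ⟶ Y) (hf : IsRegEpi f) (m : Z ⟶ W) [Mono m]
    (a : X ⟶ Z) (b : Y ⟶ W) (h : a ≫ m = f ≫ b) :
    ∃ w : Y ⟶ Z, f ≫ w = a ∧ w ≫ m = b := by
  obtain ⟨hf⟩ := hf
  haveI := isRegularEpi_of_regularEpi hf
  have sq : CommSq a f m b := ⟨h⟩
  exact ⟨sq.lift, sq.fac_left, sq.fac_right⟩

theorem isRegEpi_comp_iso {X Y Z : C} (f : X ⟶ Y) (g : Y ⟶ Z) (hf : IsRegEpi f) [IsIso g] :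
    IsRegEpi (f ≫ g) := by
  obtain ⟨hf⟩ := hf
  have hw : hf.left ≫ f ≫ g = hf.right ≫ f ≫ g := by rw [reassoc_of% hf.w]
  refine ⟨⟨hf.W, hf.left, hf.right, hw, Cofork.IsColimit.mk _
    (fun s => inv g ≫ Cofork.IsColimit.desc hf.isColimit (Cofork.π s) s.condition)
    (fun s => ?_) (fun s m hm => ?_)⟩⟩
  · rw [Cofork.π_ofπ, Category.assoc, IsIso.hom_inv_id_assoc]
    exact Cofork.IsColimit.π_desc' hf.isColimit _ _
  · rw [Cofork.π_ofπ] at hm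
    rw [IsIso.eq_inv_comp]
    refine Cofork.IsColimit.hom_ext hf.isColimit ?_
    change f ≫ g ≫ m = f ≫ _
    rw [← Category.assoc, hm]
    have := Cofork.IsColimit.π_desc' hf.isColimit s.π s.condition
    rw [Cofork.π_ofπ] at this
    exact this.symm

section
variable [HasZeroMorphisms C] [HasFiniteLimits C] [IsSemiAbelian C]

/-- The protomodularity "weapon": for a split epi `p` with section `s`, any mono `m`
through which `s` and `kernel.ι p` factor is an isomorphism. -/
theorem weapon {E B M : C} (p : E ⟶ B) (s : B ⟶ E) (hs : s ≫ p = 𝟙 B)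
    (m : M ⟶ E) [Mono m] (s' : B ⟶ M) (hs' : s' ≫ m = s)
    (kf : kernel p ⟶ M) (hkf : kf ≫ m = kernel.ι p) : IsIso m := by
  have hp : IsRegEpi p := isRegEpi_of_section p s hs
  have hp' : IsRegEpi (m ≫ p) := isRegEpi_of_section _ s'
    (by rw [← Category.assoc, hs', hs])
  have hcond : (kernel.ι (m ≫ p) ≫ m) ≫ p = 0 := by
    rw [Category.assoc]; exact kernel.condition _
  set u : kernel (m ≫ p) ⟶ kernel p := kernel.lift p (kernel.ι (m ≫ p) ≫ m) hcond with hu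
  have h1 : u ≫ kernel.ι p = kernel.ι (m ≫ p) ≫ m := kernel.lift_ι _ _ _
  have hcond' : kf ≫ m ≫ p = 0 := by
    rw [← Category.assoc, hkf]; exact kernel.condition p
  set u' : kernel p ⟶ kernel (m ≫ p) := kernel.lift (m ≫ p) kf hcond' with hu'
  have h2 : u' ≫ kernel.ι (m ≫ p) = kf := kernel.lift_ι _ _ _
  have huiso : IsIso u := by
    refine ⟨u', ?_, ?_⟩
    · apply (cancel_mono (kernel.ι (m ≫ p))).mp
      rw [Category.assoc, h2, Category.id_comp]
      apply (cancel_mono m).mp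
      rw [Category.assoc, hkf, h1]
    · apply (cancel_mono (kernel.ι p)).mp
      rw [Category.assoc, h1, ← Category.assoc, h2, hkf, Category.id_comp]
  exact IsSemiAbelian.protomodular (m ≫ p) p hp' hp m (𝟙 B)
    (by rw [Category.comp_id]) u h1 huiso inferInstance

/-- Regular epi - mono factorization. -/
theorem imageFact {X Y : C} (f : X ⟶ Y) :
    ∃ (I : C) (e : X ⟶ I) (i : I ⟶ Y), IsRegEpi e ∧ Mono i ∧ e ≫ i = f := by
  haveI := IsSemiAbelian.hasCoequalizersOfKernelPairs f
  refine ⟨coequalizer (pullback.fst f f) (pullback.snd f f), coequalizer.π _ _,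
    coequalizer.desc f pullback.condition, IsRegularEpi.regularEpi, ?_, coequalizer.π_desc _ _⟩
  have hre : IsRegEpi (coequalizer.π (pullback.fst f f) (pullback.snd f f)) := IsRegularEpi.regularEpi
  set e : X ⟶ coequalizer (pullback.fst f f) (pullback.snd f f) := coequalizer.π _ _
  set i := coequalizer.desc f pullback.condition
  have hei : e ≫ i = f := coequalizer.π_desc _ _
  constructor
  intro T g h hgh
  have h1 : IsRegEpi (pullback.snd e g) := IsSemiAbelian.regularEpiPullbackStable e g hre
  have h2 : IsRegEpi (pullback.snd e (pullback.snd e g ≫ h)) :=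
    IsSemiAbelian.regularEpiPullbackStable e _ hre
  have ht : Epi (pullback.snd e (pullback.snd e g ≫ h) ≫ pullback.snd e g) := by
    haveI := epi_of_isRegEpi h1
    haveI := epi_of_isRegEpi h2
    exact epi_comp _ _
  have hx1 : (pullback.snd e (pullback.snd e g ≫ h) ≫ pullback.fst e g) ≫ e
      = (pullback.snd e (pullback.snd e g ≫ h) ≫ pullback.snd e g) ≫ g := by
    rw [Category.assoc, Category.assoc, pullback.condition]
  have hx2 : pullback.fst e (pullback.snd e g ≫ h) ≫ e
      = (pullback.snd e (pullback.snd e g ≫ h) ≫ pullback.snd e g) ≫ h := by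
    rw [pullback.condition, Category.assoc]
  have hf12 : (pullback.snd e (pullback.snd e g ≫ h) ≫ pullback.fst e g) ≫ f
      = pullback.fst e (pullback.snd e g ≫ h) ≫ f := by
    have a1 : (pullback.snd e (pullback.snd e g ≫ h) ≫ pullback.fst e g) ≫ f
        = ((pullback.snd e (pullback.snd e g ≫ h) ≫ pullback.fst e g) ≫ e) ≫ i := by
      simp only [Category.assoc, hei]
    have a2 : pullback.fst e (pullback.snd e g ≫ h) ≫ f
        = (pullback.fst e (pullback.snd e g ≫ h) ≫ e) ≫ i := by
      simp only [Category.assoc, hei]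
    rw [a1, a2, hx1, hx2, Category.assoc, Category.assoc, hgh]
    simp only [Category.assoc]
  have hcoeq : pullback.fst f f ≫ e = pullback.snd f f ≫ e := coequalizer.condition _ _
  have key : (pullback.snd e (pullback.snd e g ≫ h) ≫ pullback.fst e g) ≫ e
      = pullback.fst e (pullback.snd e g ≫ h) ≫ e := by
    have step : (pullback.lift _ _ hf12 ≫ pullback.fst f f) ≫ e
        = (pullback.lift _ _ hf12 ≫ pullback.snd f f) ≫ e := by
      rw [Category.assoc, Category.assoc, hcoeq]
    rwa [pullback.lift_fst, pullback.lift_snd] at step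
  rw [hx1, hx2] at key
  exact (cancel_epi _).mp key

end

section Core
variable [HasZeroMorphisms C] [HasFiniteLimits C] [IsSemiAbelian C] [HasCokernels C]
variable {N2 E Z : C}

/-- Abstract soundness: for a split extension `N2 → E → Z` with a second retraction-like
map `v`, the two maps `u, v` are coequalized by the cokernel of `d' = k ≫ v`. -/
theorem core_sound (u : E ⟶ Z) (s : Z ⟶ E) (k : N2 ⟶ E) (v : E ⟶ Z) (d' : N2 ⟶ Z)
    (hsu : s ≫ u = 𝟙 Z) (hsv : s ≫ v = 𝟙 Z) (hku : k ≫ u = 0) (hkv : k ≫ v = d')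
    (hker : ∀ {T : C} (x : T ⟶ E), x ≫ u = 0 → ∃ τ : T ⟶ N2, τ ≫ k = x) :
    u ≫ cokernel.π d' = v ≫ cokernel.π d' := by
  set π := cokernel.π d' with hπdef
  have hdπ : d' ≫ π = 0 := cokernel.condition d'
  have hsfac : s ≫ u ≫ π = s ≫ v ≫ π := by
    rw [← Category.assoc, ← Category.assoc, hsu, hsv]
  have hkfac : k ≫ u ≫ π = k ≫ v ≫ π := by
    rw [← Category.assoc, ← Category.assoc, hku, hkv, zero_comp, hdπ]
  obtain ⟨τ, hτ⟩ := hker (kernel.ι u) (kernel.condition u)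
  have hkfac' : (τ ≫ k) ≫ u ≫ π = (τ ≫ k) ≫ v ≫ π := by
    rw [Category.assoc, Category.assoc, hkfac]
  haveI : IsIso (equalizer.ι (u ≫ π) (v ≫ π)) :=
    weapon u s hsu (equalizer.ι (u ≫ π) (v ≫ π))
      (equalizer.lift s hsfac) (equalizer.lift_ι _ _)
      (equalizer.lift (τ ≫ k) hkfac' ) (by rw [equalizer.lift_ι, hτ])
  have := equalizer.condition (u ≫ π) (v ≫ π)
  exact (cancel_epi (equalizer.ι (u ≫ π) (v ≫ π))).mp this

theorem core_regEpi (u : E ⟶ Z) (s : Z ⟶ E) (k : N2 ⟶ E) (v : E ⟶ Z) (d' : N2 ⟶ Z)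
    (hsu : s ≫ u = 𝟙 Z) (hsv : s ≫ v = 𝟙 Z) (hku : k ≫ u = 0) (hkv : k ≫ v = d')
    (hker : ∀ {T : C} (x : T ⟶ E), x ≫ u = 0 → ∃ τ : T ⟶ N2, τ ≫ k = x)
    (h : u ≫ cokernel.π d' = v ≫ cokernel.π d') :
    IsRegEpi (pullback.lift u v h) := by
  set π := cokernel.π d' with hπdef
  have hdπ : d' ≫ π = 0 := cokernel.condition d'
  -- image of d'
  obtain ⟨I, e, i, he, hi, hei⟩ := imageFact (C := C) d'
  haveI := hi
  haveI : Epi e := epi_of_isRegEpi he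
  -- kernel pair of u and the relation map
  set φ : pullback u u ⟶ Z ⨯ Z :=
    prod.lift (pullback.fst u u ≫ v) (pullback.snd u u ≫ v) with hφdef
  obtain ⟨R₂, e₂, i₂, he₂, hi₂, hei₂⟩ := imageFact (C := C) φ
  haveI := hi₂
  haveI : Epi e₂ := epi_of_isRegEpi he₂
  set r₀ : R₂ ⟶ Z := i₂ ≫ prod.fst with hr₀def
  set r₁ : R₂ ⟶ Z := i₂ ≫ prod.snd with hr₁def
  have her₀ : e₂ ≫ r₀ = pullback.fst u u ≫ v := by
    rw [hr₀def, ← Category.assoc, hei₂, hφdef, prod.lift_fst]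
  have her₁ : e₂ ≫ r₁ = pullback.snd u u ≫ v := by
    rw [hr₁def, ← Category.assoc, hei₂, hφdef, prod.lift_snd]
  -- reflexivity
  set δ₂ : Z ⟶ R₂ := s ≫ pullback.lift (𝟙 E) (𝟙 E) rfl ≫ e₂ with hδ₂def
  have hδ₂r₀ : δ₂ ≫ r₀ = 𝟙 Z := by
    rw [hδ₂def, Category.assoc, Category.assoc, her₀, ← Category.assoc (pullback.lift _ _ _),
      pullback.lift_fst, Category.id_comp, hsv]
  have hδ₂r₁ : δ₂ ≫ r₁ = 𝟙 Z := by
    rw [hδ₂def, Category.assoc, Category.assoc, her₁, ← Category.assoc (pullback.lift _ _ _),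
      pullback.lift_snd, Category.id_comp, hsv]
  -- symmetry
  have hswφ : pullback.lift (pullback.snd u u) (pullback.fst u u) pullback.condition.symm ≫ φ
      = φ ≫ prod.lift prod.snd prod.fst := by
    apply Limits.prod.hom_ext
    · rw [Category.assoc, hφdef, prod.lift_fst, Category.assoc, prod.lift_fst,
        ← Category.assoc, pullback.lift_fst, prod.lift_snd]
    · rw [Category.assoc, hφdef, prod.lift_snd, Category.assoc, prod.lift_snd,
        ← Category.assoc, pullback.lift_snd, prod.lift_fst]
  obtain ⟨τ₂, hτ₂e, hτ₂i⟩ := regEpi_mono_lift e₂ he₂ i₂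
    (pullback.lift (pullback.snd u u) (pullback.fst u u) pullback.condition.symm ≫ e₂)
    (i₂ ≫ prod.lift prod.snd prod.fst)
    (by rw [Category.assoc, hei₂, ← Category.assoc, hei₂, hswφ])
  have hτ₂r₀ : τ₂ ≫ r₀ = r₁ := by
    rw [hr₀def, ← Category.assoc, hτ₂i, Category.assoc, prod.lift_fst, hr₁def]
  have hτ₂r₁ : τ₂ ≫ r₁ = r₀ := by
    rw [hr₁def, ← Category.assoc, hτ₂i, Category.assoc, prod.lift_snd, hr₀def]
  -- transitivity
  have hχ : ∃ χ : pullback r₁ r₀ ⟶ R₂, χ ≫ i₂ =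
      prod.lift (pullback.fst r₁ r₀ ≫ r₀) (pullback.snd r₁ r₀ ≫ r₁) := by
    have hjAcond : (𝟙 R₂) ≫ r₁ = (r₁ ≫ δ₂) ≫ r₀ := by
      rw [Category.id_comp, Category.assoc, hδ₂r₀, Category.comp_id]
    have hjBcond : (r₀ ≫ δ₂) ≫ r₁ = (𝟙 R₂) ≫ r₀ := by
      rw [Category.id_comp, Category.assoc, hδ₂r₁, Category.comp_id]
    have hjAm₂ : pullback.lift (𝟙 R₂) (r₁ ≫ δ₂) hjAcond
        ≫ prod.lift (pullback.fst r₁ r₀ ≫ r₀) (pullback.snd r₁ r₀ ≫ r₁) = i₂ := by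
      apply Limits.prod.hom_ext
      · rw [Category.assoc, prod.lift_fst, ← Category.assoc, pullback.lift_fst,
          Category.id_comp, ← hr₀def]
      · rw [Category.assoc, prod.lift_snd, ← Category.assoc, pullback.lift_snd,
          Category.assoc, hδ₂r₁, Category.comp_id, ← hr₁def]
    have hjBm₂ : pullback.lift (r₀ ≫ δ₂) (𝟙 R₂) hjBcond
        ≫ prod.lift (pullback.fst r₁ r₀ ≫ r₀) (pullback.snd r₁ r₀ ≫ r₁) = i₂ := by
      apply Limits.prod.hom_ext
      · rw [Category.assoc, prod.lift_fst, ← Category.assoc, pullback.lift_fst,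
          Category.assoc, hδ₂r₀, Category.comp_id, ← hr₀def]
      · rw [Category.assoc, prod.lift_snd, ← Category.assoc, pullback.lift_snd,
          Category.id_comp, ← hr₁def]
    have hjBq : pullback.lift (r₀ ≫ δ₂) (𝟙 R₂) hjBcond ≫ pullback.snd r₁ r₀ = 𝟙 R₂ :=
      pullback.lift_snd _ _ _
    have hξr₁ : (kernel.ι (pullback.snd r₁ r₀) ≫ pullback.fst r₁ r₀) ≫ r₁ = 0 := by
      rw [Category.assoc, pullback.condition, ← Category.assoc, kernel.condition, zero_comp]
    have hkerfac : kernel.ι (pullback.snd r₁ r₀)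
        = (kernel.ι (pullback.snd r₁ r₀) ≫ pullback.fst r₁ r₀)
          ≫ pullback.lift (𝟙 R₂) (r₁ ≫ δ₂) hjAcond := by
      apply pullback.hom_ext
      · rw [Category.assoc, pullback.lift_fst, Category.comp_id]
      · rw [Category.assoc, pullback.lift_snd, kernel.condition, ← Category.assoc, hξr₁,
          zero_comp]
    haveI : IsIso (pullback.snd i₂
        (prod.lift (pullback.fst r₁ r₀ ≫ r₀) (pullback.snd r₁ r₀ ≫ r₁))) := by
      apply weapon (pullback.snd r₁ r₀) (pullback.lift (r₀ ≫ δ₂) (𝟙 R₂) hjBcond) hjBq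
        (pullback.snd i₂ _)
        (pullback.lift (𝟙 R₂) (pullback.lift (r₀ ≫ δ₂) (𝟙 R₂) hjBcond)
          (by rw [Category.id_comp, hjBm₂]))
        (pullback.lift_snd _ _ _)
        ((kernel.ι (pullback.snd r₁ r₀) ≫ pullback.fst r₁ r₀)
          ≫ pullback.lift (𝟙 R₂) (pullback.lift (𝟙 R₂) (r₁ ≫ δ₂) hjAcond)
            (by rw [Category.id_comp, hjAm₂]))
        (by rw [Category.assoc, pullback.lift_snd, ← hkerfac])
    refine ⟨inv (pullback.snd i₂
        (prod.lift (pullback.fst r₁ r₀ ≫ r₀) (pullback.snd r₁ r₀ ≫ r₁)))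
      ≫ pullback.fst i₂
        (prod.lift (pullback.fst r₁ r₀ ≫ r₀) (pullback.snd r₁ r₀ ≫ r₁)), ?_⟩
    rw [Category.assoc, pullback.condition, ← Category.assoc, IsIso.inv_hom_id,
      Category.id_comp]
  obtain ⟨χ, hχi⟩ := hχ
  have hχr₀ : χ ≫ r₀ = pullback.fst r₁ r₀ ≫ r₀ := by
    have step : χ ≫ i₂ ≫ prod.fst
        = prod.lift (pullback.fst r₁ r₀ ≫ r₀) (pullback.snd r₁ r₀ ≫ r₁) ≫ prod.fst := by
      rw [← Category.assoc, hχi]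
    rw [prod.lift_fst] at step
    exact step
  have hχr₁ : χ ≫ r₁ = pullback.snd r₁ r₀ ≫ r₁ := by
    have step : χ ≫ i₂ ≫ prod.snd
        = prod.lift (pullback.fst r₁ r₀ ≫ r₀) (pullback.snd r₁ r₀ ≫ r₁) ≫ prod.snd := by
      rw [← Category.assoc, hχi]
    rw [prod.lift_snd] at step
    exact step
  -- exactness: r₀, r₁ is a kernel pair
  have hjm : ∀ {T : C} (a b : T ⟶ R₂), a ≫ r₀ = b ≫ r₀ → a ≫ r₁ = b ≫ r₁ → a = b := by
    intro T a b h0 h1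
    apply (cancel_mono i₂).mp
    apply Limits.prod.hom_ext
    · rw [Category.assoc, Category.assoc, ← hr₀def]; exact h0
    · rw [Category.assoc, Category.assoc, ← hr₁def]; exact h1
  have heqv : ∀ T : C, _root_.Equivalence
      fun x y : T ⟶ Z => ∃ t : T ⟶ R₂, t ≫ r₀ = x ∧ t ≫ r₁ = y := by
    intro T
    constructor
    · intro x
      exact ⟨x ≫ δ₂, by rw [Category.assoc, hδ₂r₀, Category.comp_id],
        by rw [Category.assoc, hδ₂r₁, Category.comp_id]⟩
    · rintro x y ⟨t, ht0, ht1⟩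
      exact ⟨t ≫ τ₂, by rw [Category.assoc, hτ₂r₀, ht1], by rw [Category.assoc, hτ₂r₁, ht0]⟩
    · rintro x y z' ⟨t, ht0, ht1⟩ ⟨t', ht'0, ht'1⟩
      refine ⟨pullback.lift t t' (by rw [ht1, ht'0]) ≫ χ, ?_, ?_⟩
      · rw [Category.assoc, hχr₀, ← Category.assoc, pullback.lift_fst, ht0]
      · rw [Category.assoc, hχr₁, ← Category.assoc, pullback.lift_snd, ht'1]
  obtain ⟨Y, f, hkp⟩ := IsSemiAbelian.exactEquivalenceRelations r₀ r₁ hjm heqv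
  have hrf : r₀ ≫ f = r₁ ≫ f := hkp.w
  -- d' ≫ f = 0
  have hξ₀r₀ : (pullback.lift (0 : N2 ⟶ E) k (by rw [zero_comp, hku]) ≫ e₂) ≫ r₀ = 0 := by
    rw [Category.assoc, her₀, ← Category.assoc, pullback.lift_fst, zero_comp]
  have hξ₀r₁ : (pullback.lift (0 : N2 ⟶ E) k (by rw [zero_comp, hku]) ≫ e₂) ≫ r₁ = d' := by
    rw [Category.assoc, her₁, ← Category.assoc, pullback.lift_snd, hkv]
  have hdf : d' ≫ f = 0 := by
    rw [← hξ₀r₁, Category.assoc, ← hrf, ← Category.assoc, hξ₀r₀, zero_comp]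
  have hif : i ≫ f = 0 := by
    apply (cancel_epi e).mp
    rw [← Category.assoc, hei, hdf, comp_zero]
  -- the V argument: kernel f ≤ I
  have hlam : ∃ lam : kernel f ⟶ I, lam ≫ i = kernel.ι f := by
    have h0f : (0 : kernel f ⟶ Z) ≫ f = kernel.ι f ≫ f := by
      rw [zero_comp, kernel.condition]
    have ht0 : hkp.lift 0 (kernel.ι f) h0f ≫ r₀ = 0 := hkp.lift_fst _ _ _
    have ht1 : hkp.lift 0 (kernel.ι f) h0f ≫ r₁ = kernel.ι f := hkp.lift_snd _ _ _
    have hpbre : IsRegEpi (pullback.snd e₂ (hkp.lift 0 (kernel.ι f) h0f)) :=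
      IsSemiAbelian.regularEpiPullbackStable e₂ _ he₂
    have hcondV : pullback.fst e₂ (hkp.lift 0 (kernel.ι f) h0f)
        ≫ pullback.fst u u ≫ v = 0 := by
      rw [← her₀, ← Category.assoc, ← Category.assoc, pullback.condition,
        Category.assoc, Category.assoc, ht0, comp_zero]
    -- the split epi c : V ⟶ kernel v
    have hVc : (kernel.ι (pullback.fst u u ≫ v) ≫ pullback.fst u u) ≫ v = 0 := by
      rw [Category.assoc]; exact kernel.condition _
    have hcι : kernel.lift v (kernel.ι (pullback.fst u u ≫ v) ≫ pullback.fst u u) hVc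
        ≫ kernel.ι v = kernel.ι (pullback.fst u u ≫ v) ≫ pullback.fst u u :=
      kernel.lift_ι _ _ _
    have hdgcond : pullback.lift (kernel.ι v) (kernel.ι v) rfl
        ≫ pullback.fst u u ≫ v = 0 := by
      rw [← Category.assoc, pullback.lift_fst, kernel.condition]
    have hσVι : kernel.lift (pullback.fst u u ≫ v)
          (pullback.lift (kernel.ι v) (kernel.ι v) rfl) hdgcond
        ≫ kernel.ι (pullback.fst u u ≫ v)
        = pullback.lift (kernel.ι v) (kernel.ι v) rfl := kernel.lift_ι _ _ _
    have hσVc : kernel.lift (pullback.fst u u ≫ v)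
          (pullback.lift (kernel.ι v) (kernel.ι v) rfl) hdgcond
        ≫ kernel.lift v (kernel.ι (pullback.fst u u ≫ v) ≫ pullback.fst u u) hVc
        = 𝟙 (kernel v) := by
      apply (cancel_mono (kernel.ι v)).mp
      rw [Category.assoc, hcι, ← Category.assoc, hσVι, pullback.lift_fst, Category.id_comp]
    -- kernel of c factors through the preimage of I
    have hkc1 : (kernel.ι (kernel.lift v
          (kernel.ι (pullback.fst u u ≫ v) ≫ pullback.fst u u) hVc)
        ≫ kernel.ι (pullback.fst u u ≫ v)) ≫ pullback.fst u u = 0 := by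
      have step : (kernel.ι (kernel.lift v
            (kernel.ι (pullback.fst u u ≫ v) ≫ pullback.fst u u) hVc)
          ≫ kernel.lift v (kernel.ι (pullback.fst u u ≫ v) ≫ pullback.fst u u) hVc)
          ≫ kernel.ι v = 0 := by
        rw [kernel.condition, zero_comp]
      rw [Category.assoc, hcι] at step
      rw [Category.assoc]
      exact step
    have hkc2 : ((kernel.ι (kernel.lift v
          (kernel.ι (pullback.fst u u ≫ v) ≫ pullback.fst u u) hVc)
        ≫ kernel.ι (pullback.fst u u ≫ v)) ≫ pullback.snd u u) ≫ u = 0 := by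
      rw [Category.assoc, ← pullback.condition, ← Category.assoc, hkc1, zero_comp]
    obtain ⟨n', hn'⟩ := hker _ hkc2
    have hfacJ : (n' ≫ e) ≫ i = kernel.ι (kernel.lift v
          (kernel.ι (pullback.fst u u ≫ v) ≫ pullback.fst u u) hVc)
        ≫ kernel.ι (pullback.fst u u ≫ v) ≫ pullback.snd u u ≫ v := by
      rw [Category.assoc, hei, ← hkv, ← Category.assoc, hn']
      simp only [Category.assoc]
    have hlσcond : (0 : kernel v ⟶ I) ≫ i
        = kernel.lift (pullback.fst u u ≫ v)
            (pullback.lift (kernel.ι v) (kernel.ι v) rfl) hdgcond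
          ≫ kernel.ι (pullback.fst u u ≫ v) ≫ pullback.snd u u ≫ v := by
      rw [zero_comp, ← Category.assoc, hσVι, ← Category.assoc, pullback.lift_snd,
        kernel.condition]
    haveI : IsIso (pullback.snd i
        (kernel.ι (pullback.fst u u ≫ v) ≫ pullback.snd u u ≫ v)) := by
      apply weapon (kernel.lift v (kernel.ι (pullback.fst u u ≫ v) ≫ pullback.fst u u) hVc)
        (kernel.lift (pullback.fst u u ≫ v)
          (pullback.lift (kernel.ι v) (kernel.ι v) rfl) hdgcond) hσVc
        (pullback.snd i (kernel.ι (pullback.fst u u ≫ v) ≫ pullback.snd u u ≫ v))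
        (pullback.lift 0 (kernel.lift (pullback.fst u u ≫ v)
          (pullback.lift (kernel.ι v) (kernel.ι v) rfl) hdgcond) hlσcond)
        (pullback.lift_snd _ _ _)
        (pullback.lift (n' ≫ e) (kernel.ι _) hfacJ)
        (pullback.lift_snd _ _ _)
    have hχVi : (inv (pullback.snd i
          (kernel.ι (pullback.fst u u ≫ v) ≫ pullback.snd u u ≫ v))
        ≫ pullback.fst i (kernel.ι (pullback.fst u u ≫ v) ≫ pullback.snd u u ≫ v)) ≫ i
        = kernel.ι (pullback.fst u u ≫ v) ≫ pullback.snd u u ≫ v := by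
      rw [Category.assoc, pullback.condition, ← Category.assoc, IsIso.inv_hom_id,
        Category.id_comp]
    -- assemble the lift
    have hψι : kernel.lift (pullback.fst u u ≫ v)
          (pullback.fst e₂ (hkp.lift 0 (kernel.ι f) h0f)) hcondV
        ≫ kernel.ι (pullback.fst u u ≫ v)
        = pullback.fst e₂ (hkp.lift 0 (kernel.ι f) h0f) := kernel.lift_ι _ _ _
    have hcover : (kernel.lift (pullback.fst u u ≫ v)
            (pullback.fst e₂ (hkp.lift 0 (kernel.ι f) h0f)) hcondV
          ≫ (inv (pullback.snd i
              (kernel.ι (pullback.fst u u ≫ v) ≫ pullback.snd u u ≫ v))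
            ≫ pullback.fst i
              (kernel.ι (pullback.fst u u ≫ v) ≫ pullback.snd u u ≫ v))) ≫ i
        = pullback.snd e₂ (hkp.lift 0 (kernel.ι f) h0f) ≫ kernel.ι f := by
      have mid : pullback.fst e₂ (hkp.lift 0 (kernel.ι f) h0f) ≫ pullback.snd u u ≫ v
          = pullback.snd e₂ (hkp.lift 0 (kernel.ι f) h0f) ≫ kernel.ι f := by
        rw [← her₁, ← Category.assoc, pullback.condition, Category.assoc, ht1]
      rw [Category.assoc, hχVi, ← Category.assoc, hψι, mid]
    obtain ⟨lam, _, hlam2⟩ := regEpi_mono_lift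
      (pullback.snd e₂ (hkp.lift 0 (kernel.ι f) h0f)) hpbre i _ (kernel.ι f) hcover
    exact ⟨lam, hlam2⟩
  obtain ⟨lam, hlam⟩ := hlam
  -- kernel π ≅ I
  have hπft : π ≫ cokernel.desc d' f hdf = f := cokernel.π_desc _ _ _
  have hkπf : kernel.ι π ≫ f = 0 := by
    rw [← hπft, ← Category.assoc, kernel.condition, zero_comp]
  set ν : kernel π ⟶ I := kernel.lift f (kernel.ι π) hkπf ≫ lam with hνdef
  have hν : ν ≫ i = kernel.ι π := by
    rw [hνdef, Category.assoc, hlam, kernel.lift_ι]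
  have hiπ : i ≫ π = 0 := by
    apply (cancel_epi e).mp
    rw [← Category.assoc, hei, hdπ, comp_zero]
  set μ : I ⟶ kernel π := kernel.lift π i hiπ with hμdef
  have hμ : μ ≫ kernel.ι π = i := kernel.lift_ι _ _ _
  have hμν : μ ≫ ν = 𝟙 I := by
    apply (cancel_mono i).mp
    rw [Category.assoc, hν, hμ, Category.id_comp]
  have hνμ : ν ≫ μ = 𝟙 (kernel π) := by
    apply (cancel_mono (kernel.ι π)).mp
    rw [Category.assoc, hμ, hν, Category.id_comp]
  haveI : IsIso μ := ⟨ν, hμν, hνμ⟩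
  -- kernel of the first projection of the kernel pair of π
  have hω0 : pullback.lift (0 : kernel π ⟶ Z) (kernel.ι π)
      (by rw [zero_comp, kernel.condition]) ≫ pullback.fst π π = 0 := pullback.lift_fst _ _ _
  set ω : kernel π ⟶ kernel (pullback.fst π π) :=
    kernel.lift _ (pullback.lift 0 (kernel.ι π) (by rw [zero_comp, kernel.condition])) hω0
    with hωdef
  have hωι : ω ≫ kernel.ι (pullback.fst π π)
      = pullback.lift 0 (kernel.ι π) (by rw [zero_comp, kernel.condition]) :=
    kernel.lift_ι _ _ _
  have hγcond : (kernel.ι (pullback.fst π π) ≫ pullback.snd π π) ≫ π = 0 := by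
    rw [Category.assoc, ← pullback.condition, ← Category.assoc, kernel.condition, zero_comp]
  set γ : kernel (pullback.fst π π) ⟶ kernel π :=
    kernel.lift π (kernel.ι (pullback.fst π π) ≫ pullback.snd π π) hγcond with hγdef
  have hγι : γ ≫ kernel.ι π = kernel.ι (pullback.fst π π) ≫ pullback.snd π π :=
    kernel.lift_ι _ _ _
  have hωγ : ω ≫ γ = 𝟙 _ := by
    apply (cancel_mono (kernel.ι π)).mp
    rw [Category.assoc, hγι, ← Category.assoc, hωι, pullback.lift_snd, Category.id_comp]
  have hγω : γ ≫ ω = 𝟙 _ := by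
    apply (cancel_mono (kernel.ι (pullback.fst π π))).mp
    rw [Category.assoc, hωι, Category.id_comp]
    apply pullback.hom_ext
    · rw [Category.assoc, pullback.lift_fst, comp_zero, kernel.condition]
    · rw [Category.assoc, pullback.lift_snd, hγι]
  haveI : IsIso ω := ⟨γ, hωγ, hγω⟩
  -- the comparison map and its restriction to kernels
  set j₀ : E ⟶ pullback π π := pullback.lift u v h with hj₀def
  have hj₀fst : j₀ ≫ pullback.fst π π = u := pullback.lift_fst _ _ _
  have hj₀snd : j₀ ≫ pullback.snd π π = v := pullback.lift_snd _ _ _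
  have hκcond : (k ≫ j₀) ≫ pullback.fst π π = 0 := by
    rw [Category.assoc, hj₀fst, hku]
  set κ : N2 ⟶ kernel (pullback.fst π π) := kernel.lift _ (k ≫ j₀) hκcond with hκdef
  have hκι : κ ≫ kernel.ι (pullback.fst π π) = k ≫ j₀ := kernel.lift_ι _ _ _
  have hκeq : κ = e ≫ μ ≫ ω := by
    apply (cancel_mono (kernel.ι (pullback.fst π π))).mp
    rw [hκι, Category.assoc, Category.assoc, hωι]
    apply pullback.hom_ext
    · rw [Category.assoc, hj₀fst, hku, Category.assoc, Category.assoc, pullback.lift_fst,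
        comp_zero, comp_zero]
    · rw [Category.assoc, hj₀snd, hkv, Category.assoc, Category.assoc, pullback.lift_snd,
        hμ, hei]
  have hκre : IsRegEpi κ := by
    rw [hκeq]
    haveI : IsIso (μ ≫ ω) := inferInstance
    have := isRegEpi_comp_iso e (μ ≫ ω) he
    simpa using this
  -- homological lemma: j₀ is a regular epi
  obtain ⟨Im, eJ, iJ, heJ, hiJ, heiJ⟩ := imageFact (C := C) j₀
  haveI := hiJ
  have sqJ : κ ≫ kernel.ι (pullback.fst π π) = (k ≫ eJ) ≫ iJ ∧ True := by
    constructor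
    · rw [hκι, Category.assoc, heiJ]
    · trivial
  obtain ⟨w, hw1, hw2⟩ := regEpi_mono_lift κ hκre iJ (k ≫ eJ) (kernel.ι (pullback.fst π π))
    (by rw [Category.assoc, heiJ, hκι])
  have hΔ : s ≫ j₀ = pullback.lift (𝟙 Z) (𝟙 Z) rfl := by
    apply pullback.hom_ext
    · rw [Category.assoc, hj₀fst, hsu, pullback.lift_fst]
    · rw [Category.assoc, hj₀snd, hsv, pullback.lift_snd]
  have hΔfst : pullback.lift (𝟙 Z) (𝟙 Z) rfl ≫ pullback.fst π π = 𝟙 Z := pullback.lift_fst _ _ _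
  haveI : IsIso iJ := weapon (pullback.fst π π) (pullback.lift (𝟙 Z) (𝟙 Z) rfl) hΔfst iJ
    (s ≫ eJ) (by rw [Category.assoc, heiJ, hΔ]) w hw2
  rw [← heiJ]
  exact isRegEpi_comp_iso _ _ heJ

end Core

section Simplicial
variable [HasZeroMorphisms C] [HasFiniteLimits C]

theorem mooreD_succ_arrow (A : SimplicialObject C) (m : ℕ) :
    Moore.MooreD A (m + 1) ≫ (Moore.NSub A (m + 1)).arrow
      = (Moore.NSub A (m + 2)).arrow ≫ A.δ (Fin.last (m + 2)) := by
  simp only [Moore.MooreD]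
  exact Subobject.factorThru_arrow _ _ _

theorem zarr_eq (A : SimplicialObject C) (n : ℕ) :
    Moore.zArrow A (n + 1) = kernel.ι (Moore.MooreD A n) ≫ (Moore.NSub A (n + 1)).arrow := rfl

theorem mono_zarr (A : SimplicialObject C) (n : ℕ) : Mono (Moore.zArrow A (n + 1)) := by
  rw [zarr_eq]; exact @mono_comp _ _ _ _ _ (kernel.ι (Moore.MooreD A n)) inferInstance (Moore.NSub A (n + 1)).arrow (Subobject.arrow_mono _)

theorem zarr_δ (A : SimplicialObject C) (n : ℕ) (i : Fin (n + 2)) :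
    Moore.zArrow A (n + 1) ≫ A.δ i = 0 := by
  erw [zarr_eq, Category.assoc]
  induction i using Fin.lastCases with
  | last =>
    cases n with
    | zero =>
      have hk : kernel.ι (Moore.MooreD A 0) ≫ ((Moore.NSub A 1).arrow ≫
          A.δ (Fin.last 1) ≫ inv (⊤ : Subobject (A _⦋0⦌)).arrow) = 0 := kernel.condition _
      have step := congrArg (fun g => g ≫ (⊤ : Subobject (A _⦋0⦌)).arrow) hk
      simp only [Category.assoc, IsIso.inv_hom_id, Category.comp_id, zero_comp] at step
      erw [Category.assoc, Category.assoc, IsIso.inv_hom_id, Category.comp_id] at step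
      exact step
    | succ m =>
      erw [← mooreD_succ_arrow, ← Category.assoc, kernel.condition, zero_comp]
  | cast j =>
    erw [Moore.arrow_comp_δ_castSucc, comp_zero]

theorem mkZ (A : SimplicialObject C) (n : ℕ) {T : C} (w : T ⟶ A _⦋n + 1⦌)
    (hw : ∀ i : Fin (n + 2), w ≫ A.δ i = 0) :
    ∃ ζ : T ⟶ Moore.Z A (n + 1), ζ ≫ Moore.zArrow A (n + 1) = w := by
  have hfac : (Moore.NSub A (n + 1)).Factors w := by
    show (Finset.univ.inf fun k : Fin (n + 1) =>
        kernelSubobject (A.δ k.castSucc)).Factors w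
    exact (Subobject.finset_inf_factors _).mpr fun j _ =>
      kernelSubobject_factors _ _ (hw j.castSucc)
  have hw₁ : (Moore.NSub A (n + 1)).factorThru w hfac ≫ (Moore.NSub A (n + 1)).arrow = w :=
    Subobject.factorThru_arrow _ _ _
  have hw₁D : (Moore.NSub A (n + 1)).factorThru w hfac ≫ Moore.MooreD A n = 0 := by
    cases n with
    | zero =>
      show (Moore.NSub A 1).factorThru w hfac ≫ ((Moore.NSub A 1).arrow ≫
          A.δ (Fin.last 1) ≫ inv (⊤ : Subobject (A _⦋0⦌)).arrow) = 0
      rw [← Category.assoc, hw₁, ← Category.assoc, hw (Fin.last 1), zero_comp]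
    | succ m =>
      apply (cancel_mono (Moore.NSub A (m + 1)).arrow).mp
      erw [Category.assoc, mooreD_succ_arrow, ← Category.assoc, hw₁, hw (Fin.last (m + 2)),
        zero_comp]
  refine ⟨kernel.lift _ _ hw₁D, ?_⟩
  erw [zarr_eq, ← Category.assoc, kernel.lift_ι, hw₁]

end Simplicial

section Construction
variable [HasZeroMorphisms C] [HasFiniteLimits C]
variable (A : SimplicialObject C) (n : ℕ)

/-- The subobject `Λ` of `A_{n+2}` of simplices whose faces `∂ᵢ`, `i ≤ n`, vanish. -/
def LSub : Subobject (A _⦋n + 2⦌) :=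
  Finset.univ.inf fun l : Fin (n + 1) => kernelSubobject (A.δ (l.castSucc.castSucc))

theorem LSub_δ (l : Fin (n + 1)) : (LSub A n).arrow ≫ A.δ (l.castSucc.castSucc) = 0 := by
  show (Finset.univ.inf fun l : Fin (n + 1) =>
      kernelSubobject (A.δ (l.castSucc.castSucc))).arrow ≫ A.δ (l.castSucc.castSucc) = 0
  rw [← Subobject.factorThru_arrow _ _ (Subobject.finset_inf_arrow_factors Finset.univ
      (fun l : Fin (n + 1) => kernelSubobject (A.δ (l.castSucc.castSucc))) l
      (Finset.mem_univ _)),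
    Category.assoc, kernelSubobject_arrow_comp, comp_zero]

theorem LSub_factors {T : C} (y : T ⟶ A _⦋n + 2⦌)
    (hy : ∀ l : Fin (n + 1), y ≫ A.δ (l.castSucc.castSucc) = 0) : (LSub A n).Factors y :=
  (Subobject.finset_inf_factors _).mpr fun l _ => kernelSubobject_factors _ _ (hy l)

/-- The object `Λ'` of homotopies. -/
noncomputable abbrev EObj : C :=
  pullback ((LSub A n).arrow ≫ A.δ ((Fin.last (n + 1)).castSucc)) (Moore.zArrow A (n + 1))

/-- `u : Λ' ⟶ Z`, the "source cycle" map. -/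
noncomputable def uMap : EObj A n ⟶ Moore.Z A (n + 1) := pullback.snd _ _

/-- The inclusion `Λ' ⟶ A_{n+2}`. -/
noncomputable def inclMap : EObj A n ⟶ A _⦋n + 2⦌ := pullback.fst _ _ ≫ (LSub A n).arrow

theorem inclMap_δ (l : Fin (n + 1)) : inclMap A n ≫ A.δ (l.castSucc.castSucc) = 0 := by
  rw [inclMap, Category.assoc, LSub_δ, comp_zero]

theorem uMap_zarr : uMap A n ≫ Moore.zArrow A (n + 1)
    = inclMap A n ≫ A.δ ((Fin.last (n + 1)).castSucc) := by
  rw [uMap, inclMap, Category.assoc, ← pullback.condition]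

theorem vfaces (i : Fin (n + 2)) :
    (inclMap A n ≫ A.δ (Fin.last (n + 2))) ≫ A.δ i = 0 := by
  induction i using Fin.lastCases with
  | last =>
    have hid := SimplicialObject.δ_comp_δ_self' (X := A) (i := Fin.last (n + 1))
      (j := (Fin.last (n + 1)).castSucc) rfl
    rw [Fin.succ_last] at hid
    rw [Category.assoc, ← hid, ← Category.assoc, ← uMap_zarr, Category.assoc, zarr_δ,
      comp_zero]
  | cast l =>
    have hid := SimplicialObject.δ_comp_δ (X := A) (i := l.castSucc) (j := Fin.last (n + 1)) (Fin.le_last _)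
    rw [Fin.succ_last] at hid
    rw [Category.assoc, hid, ← Category.assoc, inclMap_δ, zero_comp]

/-- `v : Λ' ⟶ Z`, the "target cycle" map. -/
noncomputable def vMap : EObj A n ⟶ Moore.Z A (n + 1) :=
  (mkZ A n (inclMap A n ≫ A.δ (Fin.last (n + 2))) (vfaces A n)).choose

theorem vMap_zarr : vMap A n ≫ Moore.zArrow A (n + 1)
    = inclMap A n ≫ A.δ (Fin.last (n + 2)) :=
  (mkZ A n (inclMap A n ≫ A.δ (Fin.last (n + 2))) (vfaces A n)).choose_spec

theorem sfaces (l : Fin (n + 1)) :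
    (Moore.zArrow A (n + 1) ≫ A.σ (Fin.last (n + 1))) ≫ A.δ (l.castSucc.castSucc) = 0 := by
  have hid := SimplicialObject.δ_comp_σ_of_le (X := A) (i := l.castSucc) (j := Fin.last n)
    (by simp only [Fin.le_def, Fin.coe_castSucc, Fin.val_last]; exact Fin.is_le l)
  rw [Fin.succ_last] at hid
  rw [Category.assoc, hid, ← Category.assoc, zarr_δ, zero_comp]

/-- `s : Z ⟶ Λ'`, degeneracy section. -/
noncomputable def sMap : Moore.Z A (n + 1) ⟶ EObj A n :=
  pullback.lift ((LSub A n).factorThru _ (LSub_factors A n _ (sfaces A n))) (𝟙 _)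
    (by rw [← Category.assoc, Subobject.factorThru_arrow, Category.assoc, A.δ_comp_σ_self,
      Category.comp_id, Category.id_comp])

theorem sMap_u : sMap A n ≫ uMap A n = 𝟙 _ := pullback.lift_snd _ _ _

theorem sMap_incl : sMap A n ≫ inclMap A n
    = Moore.zArrow A (n + 1) ≫ A.σ (Fin.last (n + 1)) := by
  rw [sMap, inclMap, ← Category.assoc, pullback.lift_fst, Subobject.factorThru_arrow]

theorem sMap_v : sMap A n ≫ vMap A n = 𝟙 _ := by
  haveI := mono_zarr A n
  apply (cancel_mono (Moore.zArrow A (n + 1))).mp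
  rw [Category.assoc, vMap_zarr, ← Category.assoc, sMap_incl, Category.assoc,
    A.δ_comp_σ_succ' (Fin.succ_last _).symm, Category.comp_id, Category.id_comp]

/-- `k : N_{n+2} ⟶ Λ'`. -/
noncomputable def kMap : Moore.NObj A (n + 2) ⟶ EObj A n :=
  pullback.lift ((LSub A n).factorThru _ (LSub_factors A n _
      (fun l => Moore.arrow_comp_δ_castSucc A (n + 1) l.castSucc))) 0
    (by erw [← Category.assoc, Subobject.factorThru_arrow, zero_comp]
        exact Moore.arrow_comp_δ_castSucc A (n + 1) (Fin.last (n + 1)))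

theorem kMap_u : kMap A n ≫ uMap A n = 0 := pullback.lift_snd _ _ _

theorem kMap_incl : kMap A n ≫ inclMap A n = (Moore.NSub A (n + 2)).arrow := by
  erw [kMap, inclMap, ← Category.assoc, pullback.lift_fst, Subobject.factorThru_arrow]

theorem kMap_v : kMap A n ≫ vMap A n
    = kernel.lift (Moore.MooreD A n) (Moore.MooreD A (n + 1)) (Moore.d_squared A n) := by
  haveI := mono_zarr A n
  apply (cancel_mono (Moore.zArrow A (n + 1))).mp
  erw [Category.assoc, vMap_zarr, ← Category.assoc, kMap_incl, zarr_eq, ← Category.assoc,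
    kernel.lift_ι, mooreD_succ_arrow]
  rfl

theorem mono_inclMap : Mono (inclMap A n) := by
  haveI := mono_zarr A n
  rw [inclMap]
  haveI : Mono (pullback.fst ((LSub A n).arrow ≫ A.δ ((Fin.last (n + 1)).castSucc))
      (Moore.zArrow A (n + 1))) := inferInstance
  exact mono_comp _ _

theorem hker_pkg {T : C} (x : T ⟶ EObj A n) (hx : x ≫ uMap A n = 0) :
    ∃ τ : T ⟶ Moore.NObj A (n + 2), τ ≫ kMap A n = x := by
  haveI := mono_inclMap A n
  have hfaces : ∀ l : Fin (n + 2), (x ≫ inclMap A n) ≫ A.δ (l.castSucc) = 0 := by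
    intro l
    induction l using Fin.lastCases with
    | last =>
      rw [Category.assoc, ← uMap_zarr, ← Category.assoc, hx, zero_comp]
    | cast m =>
      rw [Category.assoc, inclMap_δ, comp_zero]
  have hfac : (Moore.NSub A (n + 2)).Factors (x ≫ inclMap A n) := by
    show (Finset.univ.inf fun k : Fin (n + 2) =>
        kernelSubobject (A.δ k.castSucc)).Factors (x ≫ inclMap A n)
    exact (Subobject.finset_inf_factors _).mpr fun l _ =>
      kernelSubobject_factors _ _ (hfaces l)
  refine ⟨(Moore.NSub A (n + 2)).factorThru _ hfac, ?_⟩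
  apply (cancel_mono (inclMap A n)).mp
  erw [Category.assoc, kMap_incl, Subobject.factorThru_arrow]

theorem factor_homotopy {T : C} (y : T ⟶ A _⦋n + 2⦌)
    (hy : ∀ l : Fin (n + 1), y ≫ A.δ (l.castSucc.castSucc) = 0)
    (gz : T ⟶ Moore.Z A (n + 1))
    (hgz : gz ≫ Moore.zArrow A (n + 1) = y ≫ A.δ ((Fin.last (n + 1)).castSucc)) :
    ∃ yh : T ⟶ EObj A n, yh ≫ inclMap A n = y ∧ yh ≫ uMap A n = gz := by
  have hcond : (LSub A n).factorThru y (LSub_factors A n y hy)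
      ≫ ((LSub A n).arrow ≫ A.δ ((Fin.last (n + 1)).castSucc))
      = gz ≫ Moore.zArrow A (n + 1) := by
    rw [← Category.assoc, Subobject.factorThru_arrow, hgz]
  refine ⟨pullback.lift _ gz hcond, ?_, pullback.lift_snd _ _ _⟩
  rw [inclMap, ← Category.assoc, pullback.lift_fst, Subobject.factorThru_arrow]

end Construction

section Plumbing
variable [HasZeroMorphisms C] [HasFiniteLimits C]
variable (P : C) (A : SimplicialObject C)

theorem bpt_zero : ∀ m : ℕ, bpt (homSimplicial P A) (0 : P ⟶ A _⦋0⦌) m = (0 : P ⟶ A _⦋m⦌) := fun m => match m with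
  | 0 => rfl
  | m + 1 => by
    show (homSimplicial P A).σ 0 (bpt (homSimplicial P A) (0 : P ⟶ A _⦋0⦌) m) = _
    rw [bpt_zero m]
    show (0 : P ⟶ A _⦋m⦌) ≫ A.σ 0 = 0
    rw [zero_comp]

theorem sz_faces (n : ℕ) (z : SZ (homSimplicial P A) (0 : P ⟶ A _⦋0⦌) (n + 1))
    (i : Fin (n + 2)) : (szVal z : P ⟶ A _⦋n + 1⦌) ≫ A.δ i = 0 := by
  exact (z.2 i).trans (bpt_zero P A n)

theorem exists_zeta (n : ℕ) (z : SZ (homSimplicial P A) (0 : P ⟶ A _⦋0⦌) (n + 1)) :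
    ∃ g : P ⟶ Moore.Z A (n + 1), g ≫ Moore.zArrow A (n + 1) = szVal z :=
  mkZ A n (szVal z) (sz_faces P A n z)

end Plumbing

section Main
variable [HasZeroMorphisms C] [HasFiniteLimits C] [IsSemiAbelian C] [HasCokernels C]
variable (P : C) (A : SimplicialObject C) (n : ℕ)

/-- The canonical lift of a cycle to `Z_{n+1}`. -/
noncomputable def zeta (z : SZ (homSimplicial P A) (0 : P ⟶ A _⦋0⦌) (n + 1)) :
    P ⟶ Moore.Z A (n + 1) := (exists_zeta P A n z).choose

theorem zeta_spec (z : SZ (homSimplicial P A) (0 : P ⟶ A _⦋0⦌) (n + 1)) :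
    zeta P A n z ≫ Moore.zArrow A (n + 1) = szVal z :=
  (exists_zeta P A n z).choose_spec

theorem zeta_unique {g : P ⟶ Moore.Z A (n + 1)}
    (z : SZ (homSimplicial P A) (0 : P ⟶ A _⦋0⦌) (n + 1))
    (hg : g ≫ Moore.zArrow A (n + 1) = szVal z) : g = zeta P A n z := by
  haveI := mono_zarr A n
  apply (cancel_mono (Moore.zArrow A (n + 1))).mp
  rw [hg, zeta_spec]

theorem q_eq : Moore.q A (n + 1)
    = cokernel.π (kernel.lift (Moore.MooreD A n) (Moore.MooreD A (n + 1))
        (Moore.d_squared A n)) := rfl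

theorem main_sound : uMap A n ≫ Moore.q A (n + 1) = vMap A n ≫ Moore.q A (n + 1) := by
  rw [q_eq]
  exact core_sound (uMap A n) (sMap A n) (kMap A n) (vMap A n) _
    (sMap_u A n) (sMap_v A n) (kMap_u A n) (kMap_v A n)
    (fun x hx => hker_pkg A n x hx)

theorem sound_of {z z' : SZ (homSimplicial P A) (0 : P ⟶ A _⦋0⦌) (n + 1)}
    (h : hRel (homSimplicial P A) (0 : P ⟶ A _⦋0⦌) (n + 1) z z') :
    zeta P A n z ≫ Moore.q A (n + 1) = zeta P A n z' ≫ Moore.q A (n + 1) := by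
  obtain ⟨y, hy1, hy2, hy3⟩ := h
  have hy2' : (y : P ⟶ A _⦋n + 2⦌) ≫ A.δ ((Fin.last (n + 1)).castSucc) = szVal z := hy2
  have hy3' : (y : P ⟶ A _⦋n + 2⦌) ≫ A.δ (Fin.last (n + 2)) = szVal z' := hy3
  have hfaces : ∀ l : Fin (n + 1), (y : P ⟶ A _⦋n + 2⦌) ≫ A.δ (l.castSucc.castSucc) = 0 := by
    intro l
    have h0 := hy1 (l.castSucc.castSucc) (by simpa using l.isLt)
    exact h0.trans (bpt_zero P A (n + 1))
  obtain ⟨yh, hyh1, hyh2⟩ := factor_homotopy A n (y : P ⟶ A _⦋n + 2⦌) hfaces (zeta P A n z)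
    (by rw [zeta_spec, ← hy2'])
  have hyv : yh ≫ vMap A n = zeta P A n z' := by
    haveI := mono_zarr A n
    apply (cancel_mono (Moore.zArrow A (n + 1))).mp
    rw [Category.assoc, vMap_zarr, ← Category.assoc, hyh1, zeta_spec, hy3']
  rw [← hyh2, ← hyv, Category.assoc, Category.assoc, main_sound]

theorem hrel_of (hproj : RegularProjective P)
    {z z' : SZ (homSimplicial P A) (0 : P ⟶ A _⦋0⦌) (n + 1)}
    (h : zeta P A n z ≫ Moore.q A (n + 1) = zeta P A n z' ≫ Moore.q A (n + 1)) :
    hRel (homSimplicial P A) (0 : P ⟶ A _⦋0⦌) (n + 1) z z' := by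
  rw [q_eq] at h
  have hre := core_regEpi (uMap A n) (sMap A n) (kMap A n) (vMap A n) _
    (sMap_u A n) (sMap_v A n) (kMap_u A n) (kMap_v A n)
    (fun x hx => hker_pkg A n x hx)
    (by erw [← q_eq]; exact main_sound A n)
  obtain ⟨y₀, hy₀⟩ := hproj _ hre (pullback.lift (zeta P A n z) (zeta P A n z') h)
  have hy₀u : y₀ ≫ uMap A n = zeta P A n z := by
    have h1 := congrArg (fun t => t ≫ pullback.fst
      (cokernel.π (kernel.lift (Moore.MooreD A n) (Moore.MooreD A (n + 1))
        (Moore.d_squared A n)))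
      (cokernel.π (kernel.lift (Moore.MooreD A n) (Moore.MooreD A (n + 1))
        (Moore.d_squared A n)))) hy₀
    beta_reduce at h1
    erw [Category.assoc, pullback.lift_fst, pullback.lift_fst] at h1
    exact h1
  have hy₀v : y₀ ≫ vMap A n = zeta P A n z' := by
    have h1 := congrArg (fun t => t ≫ pullback.snd
      (cokernel.π (kernel.lift (Moore.MooreD A n) (Moore.MooreD A (n + 1))
        (Moore.d_squared A n)))
      (cokernel.π (kernel.lift (Moore.MooreD A n) (Moore.MooreD A (n + 1))
        (Moore.d_squared A n)))) hy₀
    beta_reduce at h1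
    erw [Category.assoc, pullback.lift_snd, pullback.lift_snd] at h1
    exact h1
  refine ⟨(y₀ ≫ inclMap A n : P ⟶ A _⦋n + 2⦌), ?_, ?_, ?_⟩
  · intro i hi
    refine Eq.trans ?_ (bpt_zero P A (n + 1)).symm
    show (y₀ ≫ inclMap A n) ≫ A.δ i = 0
    have hidx : i = ((⟨(i : ℕ), by omega⟩ : Fin (n + 1)).castSucc.castSucc) := by
      apply Fin.ext; simp
    rw [hidx, Category.assoc, inclMap_δ, comp_zero]
  · show (y₀ ≫ inclMap A n) ≫ A.δ ((Fin.last (n + 1)).castSucc) = szVal z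
    rw [Category.assoc, ← uMap_zarr, ← Category.assoc, hy₀u, zeta_spec]
  · show (y₀ ≫ inclMap A n) ≫ A.δ (Fin.last (n + 2)) = szVal z'
    rw [Category.assoc, ← vMap_zarr, ← Category.assoc, hy₀v, zeta_spec]

end Main

end P16
end Proof16


/-- For a regular projective `P` and a simplicial object `A` in a
semi-abelian category, sending the homotopy class of `f : P ⟶ Zₙ₊₁A` to `qₙ₊₁ ∘ f`
defines a bijection `πₙ₊₁(hom(P,A), 0) ≅ hom(P, Hₙ₊₁A)`, natural in `A`. -/
theorem homotopy_group_iso_hom_homology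
    {C : Type u} [Category.{v} C] [HasZeroMorphisms C] [HasFiniteLimits C] [IsSemiAbelian C]
    [HasCokernels C]
    (hproj : EnoughRegularProjectives C)
    (P : C) (hP : RegularProjective P) (A : SimplicialObject C) (n : ℕ) :
    (∃ φ : piSet (homSimplicial P A) (0 : P ⟶ A _⦋0⦌) (n + 1) → (P ⟶ Moore.H A (n + 1)),
      ∀ (z : SZ (homSimplicial P A) (0 : P ⟶ A _⦋0⦌) (n + 1))
        (g : P ⟶ Moore.Z A (n + 1)),
        g ≫ Moore.zArrow A (n + 1) = szVal z →
        φ (Quot.mk _ z) = g ≫ Moore.q A (n + 1)) ∧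
    (∀ φ : piSet (homSimplicial P A) (0 : P ⟶ A _⦋0⦌) (n + 1) → (P ⟶ Moore.H A (n + 1)),
      (∀ (z : SZ (homSimplicial P A) (0 : P ⟶ A _⦋0⦌) (n + 1))
        (g : P ⟶ Moore.Z A (n + 1)),
        g ≫ Moore.zArrow A (n + 1) = szVal z →
        φ (Quot.mk _ z) = g ≫ Moore.q A (n + 1)) →
      Function.Bijective φ) ∧
    -- naturality in `A`
    (∀ (B : SimplicialObject C) (f : A ⟶ B)
      (φA : piSet (homSimplicial P A) (0 : P ⟶ A _⦋0⦌) (n + 1) → (P ⟶ Moore.H A (n + 1)))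
      (φB : piSet (homSimplicial P B) (0 : P ⟶ B _⦋0⦌) (n + 1) → (P ⟶ Moore.H B (n + 1))),
      (∀ (z : SZ (homSimplicial P A) (0 : P ⟶ A _⦋0⦌) (n + 1))
        (g : P ⟶ Moore.Z A (n + 1)),
        g ≫ Moore.zArrow A (n + 1) = szVal z →
        φA (Quot.mk _ z) = g ≫ Moore.q A (n + 1)) →
      (∀ (z : SZ (homSimplicial P B) (0 : P ⟶ B _⦋0⦌) (n + 1))
        (g : P ⟶ Moore.Z B (n + 1)),
        g ≫ Moore.zArrow B (n + 1) = szVal z →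
        φB (Quot.mk _ z) = g ≫ Moore.q B (n + 1)) →
      ∀ (η : Moore.H A (n + 1) ⟶ Moore.H B (n + 1))
        (ζ : Moore.Z A (n + 1) ⟶ Moore.Z B (n + 1)),
        ζ ≫ Moore.zArrow B (n + 1) = Moore.zArrow A (n + 1) ≫ f.app (op ⦋n + 1⦌) →
        Moore.q A (n + 1) ≫ η = ζ ≫ Moore.q B (n + 1) →
        ∀ (z : SZ (homSimplicial P A) (0 : P ⟶ A _⦋0⦌) (n + 1))
          (z' : SZ (homSimplicial P B) (0 : P ⟶ B _⦋0⦌) (n + 1)),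
          szVal z' = szVal z ≫ f.app (op ⦋n + 1⦌) →
          φB (Quot.mk _ z') = φA (Quot.mk _ z) ≫ η) := by
  classical
  refine ⟨⟨Quot.lift (fun z => P16.zeta P A n z ≫ Moore.q A (n + 1))
      (fun z z' h => P16.sound_of P A n h), fun z g hg => ?_⟩, ?_, ?_⟩
  · rw [P16.zeta_unique P A n z hg]
  · intro φ hφ
    have hφ' : ∀ z, φ (Quot.mk _ z) = P16.zeta P A n z ≫ Moore.q A (n + 1) :=
      fun z => hφ z (P16.zeta P A n z) (P16.zeta_spec P A n z)
    constructor
    · intro a b hab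
      obtain ⟨z, rfl⟩ := Quot.exists_rep a
      obtain ⟨z', rfl⟩ := Quot.exists_rep b
      rw [hφ', hφ'] at hab
      exact Quot.sound (P16.hrel_of P A n hP hab)
    · intro h
      obtain ⟨g, hg⟩ := hP (cokernel.π (kernel.lift (Moore.MooreD A n)
          (Moore.MooreD A (n + 1)) (Moore.d_squared A n))) ⟨coequalizerRegular _ _⟩ h
      have hz0 : ∀ i : Fin (n + 2),
          (homSimplicial P A).δ i (g ≫ Moore.zArrow A (n + 1))
            = bpt (homSimplicial P A) (0 : P ⟶ A _⦋0⦌) n := by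
        intro i
        refine Eq.trans ?_ (P16.bpt_zero P A n).symm
        show (g ≫ Moore.zArrow A (n + 1)) ≫ A.δ i = 0
        erw [Category.assoc, P16.zarr_δ, comp_zero]
      refine ⟨Quot.mk _ ⟨g ≫ Moore.zArrow A (n + 1), hz0⟩, ?_⟩
      erw [hφ']
      rw [← P16.zeta_unique P A n ⟨g ≫ Moore.zArrow A (n + 1), hz0⟩ rfl]
      exact hg
  · intro B f φA φB hA hB η ζ hζ hqη z z' hz
    have hgB : (P16.zeta P A n z ≫ ζ) ≫ Moore.zArrow B (n + 1) = szVal z' := by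
      rw [Category.assoc, hζ, ← Category.assoc, P16.zeta_spec]
      exact hz.symm
    rw [hB z' (P16.zeta P A n z ≫ ζ) hgB, hA z (P16.zeta P A n z) (P16.zeta_spec P A n z),
      Category.assoc, Category.assoc, hqη]

end SemiAbPaper
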